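/- arXiv:1509.00888 — 2 statements merged into one kernel-verified Lean document; each statement's English description precedes it below -/
import Mathlib

section
/- Let A* ∈ ℂ^{N×n} be isometric, x0 ∈ ℂ^n nonzero with y0 := A*x0 having all components nonzero, ω0 the componentwise phase of y0, B := A·diag(ω0) with A = (A*)^H, and 𝓑 := [Re(B); Im(B)] ∈ ℝ^{2n×N}. Then max{ ‖Im(B*u)‖ : u ∈ ℂ^n, ‖u‖ = 1, Re(x0^H (i u)) = 0 } = max{ ‖𝓑^T w‖ : w ∈ ℝ^{2n}, ‖w‖ = 1, w ⟂ G(x0) }, and this common value equals the second largest singular value λ_2 of 𝓑. -/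
open Matrix Complex

noncomputable section

/-- Euclidean norm of a complex vector. -/
noncomputable def cnorm {m : Type*} [Fintype m] (v : m → ℂ) : ℝ :=
  Real.sqrt (∑ i, ‖v i‖ ^ 2)

/-- Euclidean norm of a real vector. -/
noncomputable def rnorm {m : Type*} [Fintype m] (v : m → ℝ) : ℝ :=
  Real.sqrt (∑ i, v i ^ 2)

/-- The componentwise phase `z/|z|`. -/
noncomputable def phase (z : ℂ) : ℂ := z / ((‖z‖ : ℝ) : ℂ)

/-- `B = A · diag(ω0)` where `A = (A*)ᴴ`. -/
noncomputable def Bmat {N n : ℕ} (Aadj : Matrix (Fin N) (Fin n) ℂ) (ω0 : Fin N → ℂ) :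
    Matrix (Fin n) (Fin N) ℂ := fun i j => Aadjᴴ i j * ω0 j

/-- The real form `𝓑 = [Re B; Im B]` of `B`. -/
noncomputable def calB {N n : ℕ} (Aadj : Matrix (Fin N) (Fin n) ℂ) (ω0 : Fin N → ℂ) :
    Matrix (Fin n ⊕ Fin n) (Fin N) ℝ :=
  Matrix.fromRows ((Bmat Aadj ω0).map Complex.re) ((Bmat Aadj ω0).map Complex.im)

/-- The realification `G(v) = (Re v, Im v)` of a complex vector. -/
def Gr {n : ℕ} (v : Fin n → ℂ) : Fin n ⊕ Fin n → ℝ :=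
  Sum.elim (fun i => (v i).re) (fun i => (v i).im)

section Aux
open Polynomial
variable {m R : Type*} [Fintype m] [DecidableEq m] [CommRing R]

lemma mapMatrix_mul_one (P Q : Matrix m m R) (h : P * Q = 1) :
    (C : R →+* R[X]).mapMatrix P * (C : R →+* R[X]).mapMatrix Q = 1 := by
  rw [← _root_.map_mul ((C : R →+* R[X]).mapMatrix) P Q, h, _root_.map_one]

lemma charmatrix_similar (P Q N : Matrix m m R) (h : P * Q = 1) :
    charmatrix (P * N * Q) = (C : R →+* R[X]).mapMatrix P * charmatrix N * (C : R →+* R[X]).mapMatrix Q := by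
  have hscal : ∀ (A : Matrix m m R[X]), Matrix.scalar m (X : R[X]) * A = A * Matrix.scalar m (X : R[X]) := by
    intro A; ext i j
    simp [Matrix.scalar, Matrix.diagonal_mul, Matrix.mul_diagonal, mul_comm]
  have e1 : (C : R →+* R[X]).mapMatrix P * Matrix.scalar m (X : R[X]) * (C : R →+* R[X]).mapMatrix Q
      = Matrix.scalar m (X : R[X]) := by
    rw [← hscal, mul_assoc, mapMatrix_mul_one P Q h, mul_one]
  have e2 : (C : R →+* R[X]).mapMatrix P * (C : R →+* R[X]).mapMatrix N * (C : R →+* R[X]).mapMatrix Q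
      = (C : R →+* R[X]).mapMatrix (P * N * Q) := by
    rw [_root_.map_mul, _root_.map_mul]
  unfold charmatrix
  rw [mul_sub, sub_mul, e1, e2]

lemma charpoly_similar (P Q N : Matrix m m R) (h : P * Q = 1) :
    (P * N * Q).charpoly = N.charpoly := by
  have h2 : Q * P = 1 := mul_eq_one_comm.mp h
  unfold Matrix.charpoly
  rw [charmatrix_similar P Q N h, det_mul, det_mul, mul_comm, ← mul_assoc, ← det_mul,
    mapMatrix_mul_one Q P h2]
  simp

lemma charpoly_diagonal (d : m → R) :
    (Matrix.diagonal d).charpoly = ∏ i, (X - C (d i)) := by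
  have : charmatrix (Matrix.diagonal d) = Matrix.diagonal (fun i => X - C (d i)) := by
    ext i j
    by_cases hij : i = j
    · subst hij; simp
    · simp [hij]
  rw [Matrix.charpoly, this, det_diagonal]

lemma roots_prod_fin {ι : Type*} [Fintype ι] (f : ι → ℝ) :
    (∏ i, (X - C (f i))).roots = Finset.univ.val.map f := by
  rw [Finset.prod_eq_multiset_prod]
  have : Multiset.map (fun i => X - C (f i)) Finset.univ.val
      = Multiset.map (fun a => X - C a) (Multiset.map f Finset.univ.val) := by
    rw [Multiset.map_map]; rfl
  rw [this]
  exact roots_multiset_prod_X_sub_C _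

lemma key {M : Matrix m m ℝ} (hM : M.IsHermitian)
    {g : m → ℝ} (hg : g ≠ 0) (hMg : M.mulVec g = g)
    (hbound : ∀ w : m → ℝ, w ⬝ᵥ M.mulVec w ≤ ∑ i, w i ^ 2)
    {K : ℕ} (hK1 : 1 < K)
    (lam : Fin K → ℝ) (hlam : Antitone lam)
    (hchar : M.charpoly = ∏ k : Fin K, (X - C (lam k))) :
    sSup {r : ℝ | ∃ w : m → ℝ, Real.sqrt (∑ i, w i ^ 2) = 1 ∧ (∑ i, w i * g i) = 0 ∧
        r = Real.sqrt (w ⬝ᵥ M.mulVec w)} = Real.sqrt (lam ⟨1, hK1⟩) := by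
  classical
  set U : Matrix m m ℝ := (hM.eigenvectorUnitary : Matrix m m ℝ) with hUdef
  set μ : m → ℝ := hM.eigenvalues with hmu
  have hU1 : U * star U = 1 := (Matrix.mem_unitaryGroup_iff).mp (hM.eigenvectorUnitary).2
  have hU2 : star U * U = 1 := (Matrix.mem_unitaryGroup_iff').mp (hM.eigenvectorUnitary).2
  have hstar : star U = Uᵀ := by
    ext i j; simp [Matrix.star_apply]
  have hspec : M = U * Matrix.diagonal μ * star U := by
    have := hM.spectral_theorem
    simpa using this
  -- multiset of eigenvalues equals multiset of lam
  have hchar2 : M.charpoly = ∏ i, (X - C (μ i)) := by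
    rw [hspec, charpoly_similar U (star U) _ hU1, _root_.charpoly_diagonal]
  have hms : Finset.univ.val.map lam = Finset.univ.val.map μ := by
    have := congrArg Polynomial.roots (hchar.symm.trans hchar2)
    rwa [roots_prod_fin, roots_prod_fin] at this
  have hmem1 : ∀ a : ℝ, (∃ k, lam k = a) ↔ (∃ i, μ i = a) := by
    intro a
    constructor
    · rintro ⟨k, hk⟩
      have : a ∈ Finset.univ.val.map μ := by
        rw [← hms]; exact Multiset.mem_map.mpr ⟨k, Finset.mem_univ k, hk⟩
      obtain ⟨i, _, hi⟩ := Multiset.mem_map.mp this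
      exact ⟨i, hi⟩
    · rintro ⟨i, hi⟩
      have : a ∈ Finset.univ.val.map lam := by
        rw [hms]; exact Multiset.mem_map.mpr ⟨i, Finset.mem_univ i, hi⟩
      obtain ⟨k, _, hk⟩ := Multiset.mem_map.mp this
      exact ⟨k, hk⟩
  -- coordinate machinery
  have hortho : ∀ c d : m → ℝ, (U.mulVec c) ⬝ᵥ (U.mulVec d) = c ⬝ᵥ d := by
    intro c d
    rw [dotProduct_mulVec, ← mulVec_transpose, ← hstar, mulVec_mulVec, hU2, one_mulVec]
  have hMU : ∀ c : m → ℝ, M.mulVec (U.mulVec c) = U.mulVec ((Matrix.diagonal μ).mulVec c) := by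
    intro c
    rw [mulVec_mulVec, mulVec_mulVec, hspec, mul_assoc (U * Matrix.diagonal μ), hU2, mul_one,
      ← mulVec_mulVec]
  have hform : ∀ c : m → ℝ, (U.mulVec c) ⬝ᵥ M.mulVec (U.mulVec c) = ∑ i, μ i * c i ^ 2 := by
    intro c
    rw [hMU, hortho]
    simp only [dotProduct, mulVec_diagonal]
    apply Finset.sum_congr rfl
    intro i _
    ring
  have hnorm : ∀ c : m → ℝ, (∑ i, (U.mulVec c) i ^ 2) = ∑ i, c i ^ 2 := by
    intro c
    have := hortho c c
    simpa [dotProduct, sq] using this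
  have hsurj : ∀ w : m → ℝ, U.mulVec (star U *ᵥ w) = w := by
    intro w
    rw [mulVec_mulVec, hU1, one_mulVec]
  -- eigenvalues are at most 1
  have heig : ∀ i, μ i ≤ 1 := by
    intro i
    have hb := hbound (U.mulVec (Pi.single i 1))
    rw [hform, hnorm] at hb
    simpa [Pi.single_apply, sq] using hb
  -- the coordinate vector of g
  set d : m → ℝ := star U *ᵥ g with hddef
  have hgd : g = U.mulVec d := (hsurj g).symm
  have hd_ne : d ≠ 0 := by
    intro h0
    apply hg
    rw [hgd, h0, mulVec_zero]
  have heigd : ∀ i, μ i * d i = d i := by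
    have : (Matrix.diagonal μ).mulVec d = d := by
      have h1 : star U *ᵥ (M *ᵥ g) = (Matrix.diagonal μ) *ᵥ d := by
        rw [mulVec_mulVec, hspec, ← mul_assoc, ← mul_assoc, hU2, one_mul, ← mulVec_mulVec]
      rw [hMg] at h1
      exact h1.symm
    intro i
    have := congrFun this i
    rwa [mulVec_diagonal] at this
  have hsupp : ∀ i, d i ≠ 0 → μ i = 1 := by
    intro i hi
    have h2 : (μ i - 1) * d i = 0 := by linear_combination heigd i
    rcases mul_eq_zero.mp h2 with h | h
    · linarith
    · exact absurd h hi
  have hzero1 : (0 : ℕ) < K := by omega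
  have hlam0 : lam ⟨0, hzero1⟩ = 1 := by
    obtain ⟨i, hi⟩ := Function.ne_iff.mp hd_ne
    have hmu_i : μ i = 1 := hsupp i hi
    obtain ⟨k, hk⟩ := (hmem1 1).mpr ⟨i, hmu_i⟩
    have h1 : (1 : ℝ) ≤ lam ⟨0, hzero1⟩ := by
      rw [← hk]; exact hlam (by simp [Fin.le_def])
    obtain ⟨j, hj⟩ := (hmem1 (lam ⟨0, hzero1⟩)).mp ⟨_, rfl⟩
    have h2 : lam ⟨0, hzero1⟩ ≤ 1 := by rw [← hj]; exact heig j
    linarith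
  have hlam1le : lam ⟨1, hK1⟩ ≤ 1 := by
    calc lam ⟨1, hK1⟩ ≤ lam ⟨0, hzero1⟩ := hlam (by simp [Fin.le_def])
    _ = 1 := hlam0
  set lam1 : ℝ := lam ⟨1, hK1⟩ with hl1def
  -- characterize the set via coordinates
  have hSchar : {r : ℝ | ∃ w : m → ℝ, Real.sqrt (∑ i, w i ^ 2) = 1 ∧ (∑ i, w i * g i) = 0 ∧
        r = Real.sqrt (w ⬝ᵥ M.mulVec w)}
      = {r : ℝ | ∃ c : m → ℝ, (∑ i, c i ^ 2) = 1 ∧ (∑ i, c i * d i) = 0 ∧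
        r = Real.sqrt (∑ i, μ i * c i ^ 2)} := by
    ext r
    simp only [Set.mem_setOf_eq]
    constructor
    · rintro ⟨w, hw1, hw2, hw3⟩
      refine ⟨star U *ᵥ w, ?_, ?_, ?_⟩
      · have h1 := hnorm (star U *ᵥ w)
        rw [hsurj w] at h1
        rw [← h1]
        exact Real.sqrt_eq_one.mp hw1
      · have h2 := hortho (star U *ᵥ w) d
        rw [hsurj w, ← hgd] at h2
        calc (∑ i, (star U *ᵥ w) i * d i) = (star U *ᵥ w) ⬝ᵥ d := rfl
        _ = w ⬝ᵥ g := h2.symm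
        _ = 0 := hw2
      · rw [hw3]
        congr 1
        have := hform (star U *ᵥ w)
        rw [hsurj w] at this
        exact this
    · rintro ⟨c, hc1, hc2, hc3⟩
      refine ⟨U *ᵥ c, ?_, ?_, ?_⟩
      · rw [hnorm c, hc1, Real.sqrt_one]
      · calc (∑ i, (U *ᵥ c) i * g i) = (U *ᵥ c) ⬝ᵥ g := rfl
        _ = (U *ᵥ c) ⬝ᵥ (U *ᵥ d) := by rw [← hgd]
        _ = c ⬝ᵥ d := hortho c d
        _ = 0 := hc2
      · rw [hc3, hform c]
  -- upper bound and attainment in coordinates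
  have hkey : (∀ c : m → ℝ, (∑ i, c i ^ 2) = 1 → (∑ i, c i * d i) = 0 →
        (∑ i, μ i * c i ^ 2) ≤ lam1) ∧
      (∃ c : m → ℝ, (∑ i, c i ^ 2) = 1 ∧ (∑ i, c i * d i) = 0 ∧
        (∑ i, μ i * c i ^ 2) = lam1) := by
    rcases lt_or_eq_of_le hlam1le with hlt | heq
    · -- lam1 < 1 : the eigenvalue 1 is simple
      have hcnt : ∀ (f : Fin K → ℝ), True := fun _ => trivial
      have hcount : (Finset.univ.filter (fun i => (1:ℝ) = μ i)).card = 1 := by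
        have h1 : Multiset.count (1:ℝ) (Finset.univ.val.map lam)
            = Multiset.count (1:ℝ) (Finset.univ.val.map μ) := by rw [hms]
        rw [Multiset.count_map, Multiset.count_map] at h1
        have h2 : (Finset.univ.val.filter (fun k => (1:ℝ) = lam k))
            = (Finset.univ.filter (fun k => (1:ℝ) = lam k)).val := by
          rw [Finset.filter_val]
        have h3 : (Finset.univ.val.filter (fun i => (1:ℝ) = μ i))
            = (Finset.univ.filter (fun i => (1:ℝ) = μ i)).val := by
          rw [Finset.filter_val]
        rw [h2, h3] at h1
        have h4 : (Finset.univ.filter (fun k => (1:ℝ) = lam k)) = {(⟨0, hzero1⟩ : Fin K)} := by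
          apply Finset.ext
          intro k
          simp only [Finset.mem_filter, Finset.mem_univ, true_and, Finset.mem_singleton]
          constructor
          · intro hk
            by_contra hne
            have hk1 : (⟨1, hK1⟩ : Fin K) ≤ k := by
              rw [Fin.le_def]
              simp only []
              have : k.val ≠ 0 := fun h => hne (Fin.ext h)
              omega
            have := hlam hk1
            rw [← hk] at this
            exact absurd (lt_of_le_of_lt this hlt) (lt_irrefl _)
          · intro hk
            rw [hk, hlam0]
        rw [h4] at h1
        simp only [Finset.card_val, Finset.card_singleton] at h1 ⊢
        omega
      obtain ⟨i0, hi0⟩ := Finset.card_eq_one.mp hcount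
      have hmui0 : μ i0 = 1 := by
        have : i0 ∈ Finset.univ.filter (fun i => (1:ℝ) = μ i) := by rw [hi0]; exact Finset.mem_singleton_self i0
        exact ((Finset.mem_filter.mp this).2).symm
      have huniq : ∀ i, μ i = 1 → i = i0 := by
        intro i hi
        have : i ∈ Finset.univ.filter (fun j => (1:ℝ) = μ j) := by
          simp [Finset.mem_filter, hi.symm]
        rw [hi0] at this
        exact Finset.mem_singleton.mp this
      have hdzero : ∀ i, i ≠ i0 → d i = 0 := by
        intro i hi
        by_contra hne
        exact hi (huniq i (hsupp i hne))
      have hdi0 : d i0 ≠ 0 := by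
        intro h0
        apply hd_ne
        funext i
        by_cases hii : i = i0
        · rw [hii, h0]; rfl
        · rw [hdzero i hii]; rfl
      have hmule : ∀ i, i ≠ i0 → μ i ≤ lam1 := by
        intro i hi
        obtain ⟨k, hk⟩ := (hmem1 (μ i)).mpr ⟨i, rfl⟩
        have hk0 : k ≠ ⟨0, hzero1⟩ := by
          intro h0
          rw [h0, hlam0] at hk
          exact hi (huniq i hk.symm)
        have hk1 : (⟨1, hK1⟩ : Fin K) ≤ k := by
          rw [Fin.le_def]
          have hv : k.val ≠ 0 := fun h => hk0 (Fin.ext h)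
          exact Nat.one_le_iff_ne_zero.mpr hv
        rw [← hk]
        exact hlam hk1
      constructor
      · intro c hc1 hc2
        have hci0 : c i0 = 0 := by
          have hsum : (∑ i, c i * d i) = c i0 * d i0 := by
            apply Finset.sum_eq_single i0
            · intro i _ hi
              rw [hdzero i hi, mul_zero]
            · intro h; exact absurd (Finset.mem_univ i0) h
          rw [hsum] at hc2
          exact (mul_eq_zero.mp hc2).resolve_right hdi0
        calc (∑ i, μ i * c i ^ 2) ≤ ∑ i, lam1 * c i ^ 2 := by
              apply Finset.sum_le_sum
              intro i _
              by_cases hii : i = i0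
              · rw [hii, hci0]; simp
              · exact mul_le_mul_of_nonneg_right (hmule i hii) (sq_nonneg _)
        _ = lam1 * ∑ i, c i ^ 2 := by rw [Finset.mul_sum]
        _ = lam1 := by rw [hc1, mul_one]
      · obtain ⟨j, hj⟩ := (hmem1 lam1).mp ⟨⟨1, hK1⟩, rfl⟩
        have hji0 : j ≠ i0 := by
          intro h0
          rw [h0, hmui0] at hj
          exact absurd hj.symm (ne_of_lt hlt)
        refine ⟨Pi.single j 1, ?_, ?_, ?_⟩
        · simp [Pi.single_apply, sq]
        · have : ∀ i, (Pi.single j 1 : m → ℝ) i * d i = 0 := by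
            intro i
            by_cases hij : i = j
            · subst hij
              rw [hdzero i hji0, mul_zero]
            · rw [Pi.single_eq_of_ne hij, zero_mul]
          simp [this]
        · rw [Finset.sum_eq_single j]
          · simp [hj]
          · intro i _ hi
            rw [Pi.single_eq_of_ne hi]
            ring
          · intro h; exact absurd (Finset.mem_univ j) h
    · -- lam1 = 1 : eigenvalue 1 has multiplicity ≥ 2
      have hub : ∀ c : m → ℝ, (∑ i, c i ^ 2) = 1 → (∑ i, c i * d i) = 0 →
          (∑ i, μ i * c i ^ 2) ≤ lam1 := by
        intro c hc1 _
        rw [heq]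
        calc (∑ i, μ i * c i ^ 2) ≤ ∑ i, 1 * c i ^ 2 := by
              apply Finset.sum_le_sum
              intro i _
              exact mul_le_mul_of_nonneg_right (heig i) (sq_nonneg _)
        _ = 1 := by simpa using hc1
      refine ⟨hub, ?_⟩
      -- find two distinct eigenvectors with eigenvalue 1
      have hcard2 : 1 < (Finset.univ.filter (fun i => (1:ℝ) = μ i)).card := by
        have h1 : Multiset.count (1:ℝ) (Finset.univ.val.map lam)
            = Multiset.count (1:ℝ) (Finset.univ.val.map μ) := by rw [hms]
        rw [Multiset.count_map, Multiset.count_map] at h1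
        rw [← Finset.filter_val, ← Finset.filter_val] at h1
        simp only [Finset.card_val] at h1
        have hsub : ({(⟨0, hzero1⟩ : Fin K), ⟨1, hK1⟩} : Finset (Fin K))
            ⊆ Finset.univ.filter (fun k => (1:ℝ) = lam k) := by
          intro k hk
          simp only [Finset.mem_insert, Finset.mem_singleton] at hk
          rcases hk with h | h
          · simp [h, Finset.mem_filter, hlam0.symm]
          · simp only [Finset.mem_filter, Finset.mem_univ, true_and]
            rw [h, ← hl1def, ← heq]
        have hpair : ({(⟨0, hzero1⟩ : Fin K), ⟨1, hK1⟩} : Finset (Fin K)).card = 2 := by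
          rw [Finset.card_insert_of_notMem, Finset.card_singleton]
          simp [Fin.ext_iff]
        have := Finset.card_le_card hsub
        omega
      obtain ⟨t, hdt⟩ := Function.ne_iff.mp hd_ne
      have hmut : μ t = 1 := hsupp t hdt
      have htmem : t ∈ Finset.univ.filter (fun i => (1:ℝ) = μ i) := by
        simp [Finset.mem_filter, hmut.symm]
      obtain ⟨s, hsmem, hst⟩ := Finset.exists_mem_ne hcard2 t
      have hmus : μ s = 1 := ((Finset.mem_filter.mp hsmem).2).symm
      set KK : ℝ := d t ^ 2 + d s ^ 2 with hKKdef
      have hKKpos : 0 < KK := by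
        have h1 : 0 < d t ^ 2 := (sq_nonneg (d t)).lt_of_ne (Ne.symm (pow_ne_zero 2 hdt))
        have h2 : 0 ≤ d s ^ 2 := sq_nonneg _
        rw [hKKdef]
        linarith
      set c' : m → ℝ := fun i => if i = s then d t else if i = t then -(d s) else 0 with hc'def
      have hc'supp : ∀ i, i ∉ ({s, t} : Finset m) → c' i = 0 := by
        intro i hi
        simp only [Finset.mem_insert, Finset.mem_singleton, not_or] at hi
        simp [hc'def, hi.1, hi.2]
      have hc's : c' s = d t := by simp [hc'def]
      have hc't : c' t = -(d s) := by simp [hc'def, hst.symm, Ne.symm hst]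
      have hsum2 : ∀ f : m → ℝ, (∀ i, i ∉ ({s, t} : Finset m) → f i = 0) →
          (∑ i, f i) = f s + f t := by
        intro f hf
        rw [← Finset.sum_subset (Finset.subset_univ ({s, t} : Finset m))
          (fun i _ hi => hf i hi)]
        exact Finset.sum_pair hst
      have hc'norm : (∑ i, c' i ^ 2) = KK := by
        rw [hsum2 (fun i => c' i ^ 2) (fun i hi => by simp [hc'supp i hi])]
        simp only [hc's, hc't]
        ring
      have hc'orth : (∑ i, c' i * d i) = 0 := by
        rw [hsum2 (fun i => c' i * d i) (fun i hi => by simp [hc'supp i hi])]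
        simp only [hc's, hc't]
        ring
      have hc'form : (∑ i, μ i * c' i ^ 2) = KK := by
        rw [hsum2 (fun i => μ i * c' i ^ 2) (fun i hi => by simp [hc'supp i hi])]
        simp only [hc's, hc't, hmus, hmut]
        ring
      refine ⟨fun i => c' i / Real.sqrt KK, ?_, ?_, ?_⟩
      · have : (∑ i, (c' i / Real.sqrt KK) ^ 2) = (∑ i, c' i ^ 2) / KK := by
          rw [Finset.sum_div]
          apply Finset.sum_congr rfl
          intro i _
          rw [div_pow, Real.sq_sqrt hKKpos.le]
        rw [this, hc'norm, div_self hKKpos.ne']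
      · have : (∑ i, (c' i / Real.sqrt KK) * d i) = (∑ i, c' i * d i) / Real.sqrt KK := by
          rw [Finset.sum_div]
          apply Finset.sum_congr rfl
          intro i _
          ring
        rw [this, hc'orth, zero_div]
      · have : (∑ i, μ i * (c' i / Real.sqrt KK) ^ 2) = (∑ i, μ i * c' i ^ 2) / KK := by
          rw [Finset.sum_div]
          apply Finset.sum_congr rfl
          intro i _
          rw [div_pow, Real.sq_sqrt hKKpos.le]
          ring
        rw [this, hc'form, div_self hKKpos.ne', ← heq]
  -- conclude
  obtain ⟨hub, c0, hc01, hc02, hc03⟩ := hkey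
  rw [hSchar]
  have hubS : ∀ r ∈ {r : ℝ | ∃ c : m → ℝ, (∑ i, c i ^ 2) = 1 ∧ (∑ i, c i * d i) = 0 ∧
      r = Real.sqrt (∑ i, μ i * c i ^ 2)}, r ≤ Real.sqrt lam1 := by
    rintro r ⟨c, h1, h2, rfl⟩
    exact Real.sqrt_le_sqrt (hub c h1 h2)
  have hmemS : Real.sqrt lam1 ∈ {r : ℝ | ∃ c : m → ℝ, (∑ i, c i ^ 2) = 1 ∧
      (∑ i, c i * d i) = 0 ∧ r = Real.sqrt (∑ i, μ i * c i ^ 2)} :=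
    ⟨c0, hc01, hc02, by rw [hc03]⟩
  exact le_antisymm (csSup_le ⟨_, hmemS⟩ hubS) (le_csSup ⟨_, hubS⟩ hmemS)

end Aux

lemma calBt_apply {N n : ℕ} (Aadj : Matrix (Fin N) (Fin n) ℂ) (ω0 : Fin N → ℂ)
    (v : Fin n → ℂ) :
    (calB Aadj ω0)ᵀ.mulVec (Gr v) = fun j => ((starRingEnd ℂ) (ω0 j) * Aadj.mulVec v j).re := by
  funext j
  have h1 : (starRingEnd ℂ) (ω0 j) * Aadj.mulVec v j
      = ∑ i, (starRingEnd ℂ) (ω0 j) * Aadj j i * v i := by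
    simp [Matrix.mulVec, dotProduct, Finset.mul_sum, mul_assoc]
  rw [h1, Complex.re_sum]
  simp only [Matrix.mulVec, dotProduct, Matrix.transpose_apply, Fintype.sum_sum_type,
    Matrix.fromRows_apply_inl, Matrix.fromRows_apply_inr, calB, Bmat, Gr, Sum.elim_inl,
    Sum.elim_inr, Matrix.map_apply, Matrix.conjTranspose_apply]
  rw [← Finset.sum_add_distrib]
  apply Finset.sum_congr rfl
  intro i _
  simp [Complex.mul_re, Complex.mul_im]
  ring

lemma phase_conj_mul {z : ℂ} (hz : z ≠ 0) :
    (starRingEnd ℂ) (phase z) * z = ((‖z‖ : ℝ) : ℂ) := by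
  have habs : ((‖z‖ : ℝ) : ℂ) ≠ 0 := by
    exact_mod_cast (norm_ne_zero_iff.mpr hz)
  unfold phase
  rw [map_div₀, Complex.conj_ofReal, div_mul_eq_mul_div, mul_comm, Complex.mul_conj]
  rw [Complex.normSq_eq_norm_sq]
  push_cast
  field_simp

lemma phase_mul_abs {z : ℂ} (hz : z ≠ 0) :
    phase z * ((‖z‖ : ℝ) : ℂ) = z := by
  have habs : ((‖z‖ : ℝ) : ℂ) ≠ 0 := by
    exact_mod_cast (norm_ne_zero_iff.mpr hz)
  unfold phase
  field_simp

lemma abs_phase {z : ℂ} (hz : z ≠ 0) : ‖phase z‖ = 1 := by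
  have habs : ‖z‖ ≠ 0 := norm_ne_zero_iff.mpr hz
  unfold phase
  rw [norm_div, Complex.norm_real, norm_norm, div_self habs]

lemma stardot {k : Type*} [Fintype k] (x : k → ℂ) :
    star x ⬝ᵥ x = ((∑ j, Complex.normSq (x j) : ℝ) : ℂ) := by
  push_cast
  simp only [dotProduct, Pi.star_apply]
  apply Finset.sum_congr rfl
  intro j _
  exact (Complex.normSq_eq_conj_mul_self).symm

lemma Gr_mk {n : ℕ} (w : Fin n ⊕ Fin n → ℝ) :
    Gr (fun i => ((w (Sum.inl i) : ℝ) : ℂ) + (w (Sum.inr i) : ℝ) * Complex.I) = w := by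
  funext x
  cases x with
  | inl i => simp [Gr]
  | inr i => simp [Gr]

/-- The two constrained maxima agree and equal the second largest singular value `λ₂` of
the real form `𝓑` of `B`. -/
theorem stmt10 (N n : ℕ) (hn : 0 < n)
    (Aadj : Matrix (Fin N) (Fin n) ℂ) (hiso : Aadjᴴ * Aadj = 1)
    (x0 : Fin n → ℂ) (hx0 : x0 ≠ 0) (hy0 : ∀ j, Aadj.mulVec x0 j ≠ 0)
    (ω0 : Fin N → ℂ) (hω0 : ∀ j, ω0 j = phase (Aadj.mulVec x0 j)) :
    (sSup { r : ℝ | ∃ u : Fin n → ℂ, cnorm u = 1 ∧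
          (∑ j, (starRingEnd ℂ) (x0 j) * (Complex.I * u j)).re = 0 ∧
          r = rnorm (fun j => ((starRingEnd ℂ) (ω0 j) * Aadj.mulVec u j).im) }
        = sSup { r : ℝ | ∃ w : Fin n ⊕ Fin n → ℝ, rnorm w = 1 ∧
          (∑ i, w i * Gr x0 i) = 0 ∧
          r = rnorm ((calB Aadj ω0)ᵀ.mulVec w) }) ∧
    ∀ lam : Fin (2 * n) → ℝ, Antitone lam →
      (calB Aadj ω0 * (calB Aadj ω0)ᵀ).charpoly
          = ∏ k : Fin (2 * n), (Polynomial.X - Polynomial.C (lam k)) →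
      sSup { r : ℝ | ∃ u : Fin n → ℂ, cnorm u = 1 ∧
          (∑ j, (starRingEnd ℂ) (x0 j) * (Complex.I * u j)).re = 0 ∧
          r = rnorm (fun j => ((starRingEnd ℂ) (ω0 j) * Aadj.mulVec u j).im) }
        = Real.sqrt (lam ⟨1, by omega⟩) := by
  classical
  set y0 : Fin N → ℂ := Aadj.mulVec x0 with hy0def
  have P1 : ∀ j, ‖ω0 j‖ = 1 := fun j => by rw [hω0 j]; exact abs_phase (hy0 j)
  have P2 : ∀ j, (starRingEnd ℂ) (ω0 j) * y0 j = ((‖y0 j‖ : ℝ) : ℂ) := fun j => by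
    rw [hω0 j]; exact phase_conj_mul (hy0 j)
  have P3 : ∀ j, ω0 j * ((‖y0 j‖ : ℝ) : ℂ) = y0 j := fun j => by
    rw [hω0 j]; exact phase_mul_abs (hy0 j)
  -- the three transfer identities
  have key3 : ∀ u : Fin n → ℂ, (calB Aadj ω0)ᵀ.mulVec (Gr (fun i => -Complex.I * u i))
      = fun j => ((starRingEnd ℂ) (ω0 j) * Aadj.mulVec u j).im := by
    intro u
    rw [calBt_apply]
    funext j
    have h1 : Aadj.mulVec (fun i => -Complex.I * u i) j = -Complex.I * Aadj.mulVec u j := by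
      have h0 : (fun i => -Complex.I * u i) = (-Complex.I) • u := by
        funext i; simp
      rw [h0, Matrix.mulVec_smul]
      simp
    rw [h1, show (starRingEnd ℂ) (ω0 j) * (-Complex.I * Aadj.mulVec u j)
      = -Complex.I * ((starRingEnd ℂ) (ω0 j) * Aadj.mulVec u j) from by ring]
    simp [Complex.mul_re]
  have key1 : ∀ u : Fin n → ℂ, rnorm (Gr (fun i => -Complex.I * u i)) = cnorm u := by
    intro u
    unfold rnorm cnorm
    congr 1
    simp only [Gr, Sum.elim_inl, Sum.elim_inr, Fintype.sum_sum_type]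
    rw [← Finset.sum_add_distrib]
    apply Finset.sum_congr rfl
    intro i _
    rw [← Complex.normSq_eq_norm_sq, Complex.normSq_apply]
    simp only [Complex.mul_re, Complex.mul_im, Complex.neg_re, Complex.neg_im,
      Complex.I_re, Complex.I_im]
    ring
  have key2 : ∀ u : Fin n → ℂ, (∑ i, Gr (fun i => -Complex.I * u i) i * Gr x0 i)
      = -((∑ j, (starRingEnd ℂ) (x0 j) * (Complex.I * u j)).re) := by
    intro u
    rw [Complex.re_sum, ← Finset.sum_neg_distrib]
    simp only [Gr, Sum.elim_inl, Sum.elim_inr, Fintype.sum_sum_type]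
    rw [← Finset.sum_add_distrib]
    apply Finset.sum_congr rfl
    intro i _
    simp only [Complex.mul_re, Complex.mul_im, Complex.neg_re, Complex.neg_im,
      Complex.I_re, Complex.I_im, Complex.conj_re, Complex.conj_im]
    ring
  -- equality of the two constraint sets
  have hsetq : { r : ℝ | ∃ u : Fin n → ℂ, cnorm u = 1 ∧
          (∑ j, (starRingEnd ℂ) (x0 j) * (Complex.I * u j)).re = 0 ∧
          r = rnorm (fun j => ((starRingEnd ℂ) (ω0 j) * Aadj.mulVec u j).im) }
      = { r : ℝ | ∃ w : Fin n ⊕ Fin n → ℝ, rnorm w = 1 ∧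
          (∑ i, w i * Gr x0 i) = 0 ∧
          r = rnorm ((calB Aadj ω0)ᵀ.mulVec w) } := by
    ext r
    simp only [Set.mem_setOf_eq]
    constructor
    · rintro ⟨u, h1, h2, h3⟩
      refine ⟨Gr (fun i => -Complex.I * u i), ?_, ?_, ?_⟩
      · rw [key1 u]; exact h1
      · rw [key2 u, h2, neg_zero]
      · rw [h3, key3 u]
    · rintro ⟨w, h1, h2, h3⟩
      set u : Fin n → ℂ :=
        fun i => Complex.I * (((w (Sum.inl i) : ℝ) : ℂ) + (w (Sum.inr i) : ℝ) * Complex.I)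
        with hu
      have hGw : (fun i => -Complex.I * u i)
          = (fun i => ((w (Sum.inl i) : ℝ) : ℂ) + (w (Sum.inr i) : ℝ) * Complex.I) := by
        funext i
        rw [hu]
        rw [show -Complex.I * (Complex.I * (((w (Sum.inl i) : ℝ) : ℂ)
            + (w (Sum.inr i) : ℝ) * Complex.I))
          = -(Complex.I * Complex.I) * (((w (Sum.inl i) : ℝ) : ℂ)
            + (w (Sum.inr i) : ℝ) * Complex.I) from by ring, Complex.I_mul_I]
        ring
      have hw : Gr (fun i => -Complex.I * u i) = w := by rw [hGw]; exact Gr_mk w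
      refine ⟨u, ?_, ?_, ?_⟩
      · rw [← key1 u, hw]; exact h1
      · have hk := key2 u
        rw [hw, h2] at hk
        linarith
      · rw [h3, ← key3 u, hw]
  refine ⟨by rw [hsetq], ?_⟩
  intro lam hanti hchar
  rw [hsetq]
  set M : Matrix (Fin n ⊕ Fin n) (Fin n ⊕ Fin n) ℝ := calB Aadj ω0 * (calB Aadj ω0)ᵀ with hM
  have hquad : ∀ w : Fin n ⊕ Fin n → ℝ,
      w ⬝ᵥ M.mulVec w = ∑ j, ((calB Aadj ω0)ᵀ.mulVec w) j ^ 2 := by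
    intro w
    rw [hM, ← Matrix.mulVec_mulVec, Matrix.dotProduct_mulVec, ← Matrix.mulVec_transpose]
    simp [dotProduct, sq]
  have hherm : M.IsHermitian := by
    have ht : (calB Aadj ω0)ᵀ = (calB Aadj ω0)ᴴ := by
      funext i j
      simp [Matrix.conjTranspose_apply]
    rw [hM, ht]
    exact Matrix.isHermitian_mul_conjTranspose_self _
  have hg : Gr x0 ≠ 0 := by
    intro h0
    apply hx0
    funext i
    have h1 := congrFun h0 (Sum.inl i)
    have h2 := congrFun h0 (Sum.inr i)
    simp only [Gr, Sum.elim_inl, Sum.elim_inr, Pi.zero_apply] at h1 h2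
    exact Complex.ext h1 h2
  have hiso2 : ∀ v : Fin n → ℂ,
      (∑ j, Complex.normSq (Aadj.mulVec v j)) = ∑ i, Complex.normSq (v i) := by
    intro v
    have h1 : star (Aadj.mulVec v) ⬝ᵥ (Aadj.mulVec v) = star v ⬝ᵥ v := by
      rw [Matrix.star_mulVec, ← Matrix.dotProduct_mulVec, Matrix.mulVec_mulVec, hiso,
        Matrix.one_mulVec]
    rw [stardot, stardot] at h1
    exact_mod_cast h1
  have hbound : ∀ w : Fin n ⊕ Fin n → ℝ, w ⬝ᵥ M.mulVec w ≤ ∑ i, w i ^ 2 := by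
    intro w
    set v : Fin n → ℂ :=
      fun i => ((w (Sum.inl i) : ℝ) : ℂ) + (w (Sum.inr i) : ℝ) * Complex.I with hv
    have hGr : Gr v = w := Gr_mk w
    calc w ⬝ᵥ M.mulVec w = ∑ j, ((calB Aadj ω0)ᵀ.mulVec w) j ^ 2 := hquad w
    _ = ∑ j, ((starRingEnd ℂ) (ω0 j) * Aadj.mulVec v j).re ^ 2 := by
        rw [← hGr, calBt_apply]
    _ ≤ ∑ j, Complex.normSq (Aadj.mulVec v j) := by
        apply Finset.sum_le_sum
        intro j _
        have e1 : Complex.normSq ((starRingEnd ℂ) (ω0 j) * Aadj.mulVec v j)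
            = Complex.normSq (Aadj.mulVec v j) := by
          rw [Complex.normSq_mul, Complex.normSq_conj, ← Complex.sq_norm, P1 j]
          norm_num
        rw [← e1, Complex.normSq_apply]
        calc ((starRingEnd ℂ) (ω0 j) * Aadj.mulVec v j).re ^ 2
            = ((starRingEnd ℂ) (ω0 j) * Aadj.mulVec v j).re
              * ((starRingEnd ℂ) (ω0 j) * Aadj.mulVec v j).re := sq _
        _ ≤ _ := le_add_of_nonneg_right (mul_self_nonneg _)
    _ = ∑ i, Complex.normSq (v i) := hiso2 v
    _ = ∑ i, (Gr v) i ^ 2 := by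
        simp only [Gr, Sum.elim_inl, Sum.elim_inr, Fintype.sum_sum_type]
        rw [← Finset.sum_add_distrib]
        apply Finset.sum_congr rfl
        intro i _
        rw [Complex.normSq_apply]
        ring
    _ = ∑ i, w i ^ 2 := by rw [hGr]
  have hMg : M.mulVec (Gr x0) = Gr x0 := by
    have step1 : (calB Aadj ω0)ᵀ.mulVec (Gr x0) = fun j => ‖y0 j‖ := by
      rw [calBt_apply]
      funext j
      rw [show Aadj.mulVec x0 j = y0 j from rfl, P2 j]
      exact Complex.ofReal_re _
    have hcplx : ∀ i, (∑ j, Bmat Aadj ω0 i j * ((‖y0 j‖ : ℝ) : ℂ)) = x0 i := by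
      intro i
      have e1 : ∀ j, Bmat Aadj ω0 i j * ((‖y0 j‖ : ℝ) : ℂ) = Aadjᴴ i j * y0 j := by
        intro j
        show (Aadjᴴ i j * ω0 j) * ((‖y0 j‖ : ℝ) : ℂ) = Aadjᴴ i j * y0 j
        rw [mul_assoc, P3 j]
      rw [Finset.sum_congr rfl (fun j _ => e1 j)]
      have e2 : (∑ j, Aadjᴴ i j * y0 j) = (Aadjᴴ.mulVec y0) i := rfl
      rw [e2, hy0def, Matrix.mulVec_mulVec, hiso, Matrix.one_mulVec]
    have hre : ∀ (f : ℂ → ℝ), ∀ i, (((Bmat Aadj ω0).map f).mulVec (fun j => ‖y0 j‖)) i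
        = ∑ j, f (Bmat Aadj ω0 i j) * ‖y0 j‖ := by
      intro f i
      simp [Matrix.mulVec, dotProduct, Matrix.map_apply]
    rw [hM, ← Matrix.mulVec_mulVec, step1]
    funext x
    cases x with
    | inl i =>
      show (Matrix.fromRows ((Bmat Aadj ω0).map Complex.re) ((Bmat Aadj ω0).map Complex.im)).mulVec
        (fun j => ‖y0 j‖) (Sum.inl i) = (x0 i).re
      rw [Matrix.fromRows_mulVec]
      simp only [Sum.elim_inl]
      rw [hre Complex.re i, ← hcplx i, Complex.re_sum]
      apply Finset.sum_congr rfl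
      intro j _
      rw [Complex.mul_re]
      simp
    | inr i =>
      show (Matrix.fromRows ((Bmat Aadj ω0).map Complex.re) ((Bmat Aadj ω0).map Complex.im)).mulVec
        (fun j => ‖y0 j‖) (Sum.inr i) = (x0 i).im
      rw [Matrix.fromRows_mulVec]
      simp only [Sum.elim_inr]
      rw [hre Complex.im i, ← hcplx i, Complex.im_sum]
      apply Finset.sum_congr rfl
      intro j _
      rw [Complex.mul_im]
      simp
  have hK1 : 1 < 2 * n := by omega
  have hsetq2 : { r : ℝ | ∃ w : Fin n ⊕ Fin n → ℝ, rnorm w = 1 ∧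
          (∑ i, w i * Gr x0 i) = 0 ∧
          r = rnorm ((calB Aadj ω0)ᵀ.mulVec w) }
      = { r : ℝ | ∃ w : Fin n ⊕ Fin n → ℝ, Real.sqrt (∑ i, w i ^ 2) = 1 ∧
          (∑ i, w i * Gr x0 i) = 0 ∧ r = Real.sqrt (w ⬝ᵥ M.mulVec w) } := by
    ext r
    simp only [Set.mem_setOf_eq]
    constructor
    · rintro ⟨w, h1, h2, h3⟩
      exact ⟨w, h1, h2, by rw [h3]; unfold rnorm; rw [hquad w]⟩
    · rintro ⟨w, h1, h2, h3⟩
      exact ⟨w, h1, h2, by rw [h3, hquad w]; rfl⟩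
  rw [hsetq2]
  exact key hherm hg hMg hbound hK1 lam hanti hchar
end
end

section
/- Let A* ∈ ℂ^{N×n} be isometric, x0 ∈ ℂ^n, and b := |A*x0| ∈ ℝ^N with all entries positive. Assume the phase retrieval solution is unique up to a global phase: every x ∈ ℂ^n with |A*x| = b componentwise satisfies x = e^{iθ}x0 for some θ ∈ ℝ. If y ∈ ℂ^N has all components nonzero and is a fixed point of the Fourier-domain Douglas–Rachford map, S_f(y) = y, then there exists θ ∈ ℝ such that, with ω the componentwise phase of y and x̂ := A(2 b⊙ω − y): x̂ = e^{iθ}x0, ω = e^{iθ}·ω0 where ω0 is the componentwise phase of A*x0, and A y = e^{iθ}x0; in particular x̂ = A y, i.e. the object recovered from a fixed point coincides with the true object up to a global unimodular constant. -/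
open Matrix Complex

noncomputable section

/-- The Fourier-domain Douglas-Rachford map
`S_f(y) = y + A*A(2 b⊙ω_y − y) − b⊙ω_y`. -/
noncomputable def Sf {N n : ℕ} (Aadj : Matrix (Fin N) (Fin n) ℂ) (b : Fin N → ℝ)
    (y : Fin N → ℂ) : Fin N → ℂ :=
  fun j => y j
    + Aadj.mulVec (Aadjᴴ.mulVec (fun i => 2 * (b i : ℂ) * phase (y i) - y i)) j
    - (b j : ℂ) * phase (y j)

/-- Uniqueness of the fixed point: if phase retrieval from `b = |A*x0|` is unique up to a
global phase, then every fixed point `y` of the Fourier-domain Douglas-Rachford map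
recovers the true object up to a global unimodular constant:
`x̂ = A(2b⊙ω − y) = e^{iθ} x0`, `ω = e^{iθ} ω0` and `A y = e^{iθ} x0`. -/
theorem stmt17 (N n : ℕ) (Aadj : Matrix (Fin N) (Fin n) ℂ) (hiso : Aadjᴴ * Aadj = 1)
    (x0 : Fin n → ℂ) (hy0 : ∀ j, Aadj.mulVec x0 j ≠ 0)
    (b : Fin N → ℝ) (hb : ∀ j, b j = ‖Aadj.mulVec x0 j‖)
    (huniq : ∀ x : Fin n → ℂ, (∀ j, ‖Aadj.mulVec x j‖ = b j) →
      ∃ θ : ℝ, x = fun i => Complex.exp (Complex.I * (θ : ℂ)) * x0 i)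
    (y : Fin N → ℂ) (hy : ∀ j, y j ≠ 0)
    (hfix : Sf Aadj b y = y) :
    ∃ θ : ℝ,
      (Aadjᴴ.mulVec (fun i => 2 * (b i : ℂ) * phase (y i) - y i)
        = fun i => Complex.exp (Complex.I * (θ : ℂ)) * x0 i) ∧
      ((fun j => phase (y j))
        = fun j => Complex.exp (Complex.I * (θ : ℂ)) * phase (Aadj.mulVec x0 j)) ∧
      (Aadjᴴ.mulVec y = fun i => Complex.exp (Complex.I * (θ : ℂ)) * x0 i) := by
  set u : Fin N → ℂ := fun i => 2 * (b i : ℂ) * phase (y i) - y i with hu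
  set xhat : Fin n → ℂ := Aadjᴴ.mulVec u with hxhat
  have hbpos : ∀ j, (0:ℝ) < b j := fun j => by
    rw [hb j]; exact norm_pos_iff.mpr (hy0 j)
  have hbne : ∀ j, (b j : ℂ) ≠ 0 := fun j => by
    exact_mod_cast (hbpos j).ne'
  have habsph : ∀ j, ‖phase (y j)‖ = 1 := by
    intro j
    rw [phase, norm_div, Complex.norm_real, norm_norm]
    exact div_self (norm_ne_zero_iff.mpr (hy j))
  have hfp : ∀ j, Aadj.mulVec xhat j = (b j : ℂ) * phase (y j) := by
    intro j
    have h := congrFun hfix j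
    simp only [Sf] at h
    linear_combination h
  have habs : ∀ j, ‖Aadj.mulVec xhat j‖ = b j := by
    intro j
    rw [hfp j, norm_mul, habsph j, mul_one, Complex.norm_real, Real.norm_eq_abs,
      abs_of_pos (hbpos j)]
  obtain ⟨θ, hx⟩ := huniq xhat habs
  set c : ℂ := Complex.exp (Complex.I * (θ : ℂ)) with hc
  refine ⟨θ, hx, ?_, ?_⟩
  · funext j
    have h1 : Aadj.mulVec xhat j = c * Aadj.mulVec x0 j := by
      rw [hx]
      have hs : (fun i => c * x0 i) = c • x0 := rfl
      rw [hs, Matrix.mulVec_smul]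
      simp
    have h2 := (hfp j).symm.trans h1
    have hbc : ((b j : ℝ) : ℂ) = ((‖Aadj.mulVec x0 j‖ : ℝ) : ℂ) := by
      norm_cast; exact hb j
    show phase (y j) = c * phase (Aadj.mulVec x0 j)
    conv_rhs => rw [phase, ← hbc]
    rw [mul_div_assoc', eq_div_iff (hbne j)]
    linear_combination h2
  · -- Aᴴ y = xhat
    have hv : (fun j => (b j : ℂ) * phase (y j)) = Aadj.mulVec xhat := by
      funext j; exact (hfp j).symm
    have key : Aadjᴴ.mulVec (fun j => (b j : ℂ) * phase (y j)) = xhat := by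
      rw [hv, Matrix.mulVec_mulVec, hiso, Matrix.one_mulVec]
    have hvec : u = (2:ℂ) • (fun j => (b j : ℂ) * phase (y j)) - y := by
      funext j
      show 2 * (b j : ℂ) * phase (y j) - y j
        = (2 : ℂ) * ((b j : ℂ) * phase (y j)) - y j
      ring
    have hsplit : xhat = (2:ℂ) • Aadjᴴ.mulVec (fun j => (b j : ℂ) * phase (y j))
        - Aadjᴴ.mulVec y := by
      rw [hxhat, hvec, Matrix.mulVec_sub, Matrix.mulVec_smul]
    rw [key] at hsplit
    have : Aadjᴴ.mulVec y = xhat := by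
      have := hsplit
      funext i
      have h := congrFun this i
      simp [Pi.sub_apply, Pi.smul_apply, smul_eq_mul] at h
      linear_combination h
    rw [this, hx]
end
end
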